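/- Let ρ and σ be 𝕏×𝕏 Gram matrices. Then the Hadamard product fidelity and Hadamard product distance satisfy the Fuchs–van de Graaf inequalities: 1 − D_H(ρ,σ) ≤ F_H(ρ,σ) ≤ √(1 − D_H(ρ,σ)²). -/

import Mathlib

open scoped Matrix ComplexConjugate ComplexOrder

set_option linter.unusedSectionVars false
set_option maxHeartbeats 1000000

/-- The positive semidefinite square root of a matrix (junk value `0` if the matrix is
not positive semidefinite). -/
noncomputable def psqrt {m : Type*} [Fintype m] [DecidableEq m]
    (M : Matrix m m ℂ) : Matrix m m ℂ :=
  open scoped Classical in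
  if h : M.PosSemidef then
    (h.1.eigenvectorUnitary : Matrix m m ℂ) *
      Matrix.diagonal ((↑) ∘ (Real.sqrt ·) ∘ h.1.eigenvalues) *
      (star h.1.eigenvectorUnitary : Matrix m m ℂ)
  else 0

/-- The trace norm (sum of singular values) of a complex matrix: `tr √(Aᴴ A)`. -/
noncomputable def traceNorm {m : Type*} [Fintype m] [DecidableEq m]
    (M : Matrix m m ℂ) : ℝ :=
  (psqrt (M.conjTranspose * M)).trace.re

/-- The fidelity `F(ρ',σ') = tr √(√ρ' σ' √ρ')` between two density matrices. -/
noncomputable def fidelity {m : Type*} [Fintype m] [DecidableEq m]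
    (ρ' σ' : Matrix m m ℂ) : ℝ :=
  (psqrt (psqrt ρ' * σ' * psqrt ρ')).trace.re

/-- The trace distance `D(ρ',σ') = ½‖ρ' - σ'‖_tr` between two density matrices. -/
noncomputable def traceDist {m : Type*} [Fintype m] [DecidableEq m]
    (ρ' σ' : Matrix m m ℂ) : ℝ :=
  (1 / 2) * traceNorm (ρ' - σ')

/-- The rank-one matrix `u u*` associated to a vector `u : 𝕏 → ℂ`. -/
def outerMat {X : Type*} (u : X → ℂ) : Matrix X X ℂ :=
  fun x y => u x * conj (u y)

/-- The Hadamard product fidelity between two Gram matrices. -/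
noncomputable def FH {X : Type*} [Fintype X] [DecidableEq X] (ρ σ : Matrix X X ℂ) : ℝ :=
  ⨅ u : { u : X → ℂ // ∑ x, ‖u x‖ ^ 2 = 1 },
    fidelity (ρ ⊙ outerMat u.1) (σ ⊙ outerMat u.1)

/-- The Hadamard product distance between two Gram matrices. -/
noncomputable def DH {X : Type*} [Fintype X] [DecidableEq X] (ρ σ : Matrix X X ℂ) : ℝ :=
  ⨆ u : { u : X → ℂ // ∑ x, ‖u x‖ ^ 2 = 1 },
    traceDist (ρ ⊙ outerMat u.1) (σ ⊙ outerMat u.1)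


namespace FvdG

variable {m : Type*} [Fintype m] [DecidableEq m]

open scoped MatrixOrder in
lemma psqrt_of_psd {M : Matrix m m ℂ} (h : M.PosSemidef) : psqrt M = CFC.sqrt M := by
  rw [CFC.sqrt_eq_real_sqrt M h.nonneg, cfcₙ_eq_cfc, h.1.cfc_eq]
  unfold psqrt
  rw [dif_pos h]
  simp [Matrix.IsHermitian.cfc, Unitary.conjStarAlgAut_apply]

open scoped MatrixOrder in
lemma psqrt_psd (M : Matrix m m ℂ) : (psqrt M).PosSemidef := by
  by_cases h : M.PosSemidef
  · rw [psqrt_of_psd h]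
    exact Matrix.nonneg_iff_posSemidef.mp (CFC.sqrt_nonneg M)
  · unfold psqrt
    rw [dif_neg h]
    exact Matrix.PosSemidef.zero


open scoped MatrixOrder in
lemma psqrt_mul_self {M : Matrix m m ℂ} (h : M.PosSemidef) : psqrt M * psqrt M = M := by
  rw [psqrt_of_psd h]; exact CFC.sqrt_mul_sqrt_self M h.nonneg

open scoped MatrixOrder in
lemma psqrt_sq {M : Matrix m m ℂ} (h : M.PosSemidef) : psqrt (M * M) = M := by
  have h2 : (M * M).PosSemidef := by simpa [pow_two] using h.pow 2
  rw [psqrt_of_psd h2]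
  exact CFC.sqrt_mul_self M h.nonneg

lemma trace_re_nonneg {M : Matrix m m ℂ} (h : M.PosSemidef) : 0 ≤ M.trace.re := by
  rw [Matrix.trace, Complex.re_sum]
  refine Finset.sum_nonneg fun i _ => ?_
  have := h.re_dotProduct_nonneg (Pi.single i 1)
  simpa [dotProduct, Matrix.mulVec, Pi.single_apply, Matrix.diag] using this


lemma unitary_diag_norm_le_one {U : Matrix m m ℂ} (hU : U ∈ Matrix.unitaryGroup m ℂ) (i : m) :
    ‖U i i‖ ≤ 1 := by
  have h1 : (U * star U) i i = 1 := by
    rw [Matrix.mem_unitaryGroup_iff.mp hU]; simp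
  have h2 : ∑ j, ‖U i j‖ ^ 2 = 1 := by
    have := congrArg Complex.re h1
    rw [Matrix.mul_apply, Complex.re_sum] at this
    simpa [Matrix.star_apply, Complex.mul_conj, Complex.normSq_eq_norm_sq, ← Complex.ofReal_pow, Complex.ofReal_re] using this
  nlinarith [Finset.single_le_sum (f := fun j => ‖U i j‖ ^ 2) (fun j _ => sq_nonneg _)
      (Finset.mem_univ i), norm_nonneg (U i i)]

lemma trace_mul_diag (A : Matrix m m ℂ) (d : m → ℂ) :
    (A * Matrix.diagonal d).trace = ∑ i, A i i * d i := by
  simp [Matrix.trace, Matrix.diag, Matrix.mul_diagonal]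

lemma trace_eq_sum_eig {P : Matrix m m ℂ} (hP : P.IsHermitian) :
    P.trace = ∑ i, (hP.eigenvalues i : ℂ) := by
  conv_lhs => rw [hP.spectral_theorem, Unitary.conjStarAlgAut_apply]
  rw [Matrix.trace_mul_cycle]
  have h1 : (star (hP.eigenvectorUnitary : Matrix m m ℂ)) * (hP.eigenvectorUnitary : Matrix m m ℂ)
      = 1 := Matrix.mem_unitaryGroup_iff'.mp (hP.eigenvectorUnitary).2
  rw [h1, Matrix.one_mul, Matrix.trace_diagonal]
  rfl

lemma re_trace_unitary_mul_psd_le {P W : Matrix m m ℂ} (hP : P.PosSemidef)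
    (hW : W ∈ Matrix.unitaryGroup m ℂ) : (W * P).trace.re ≤ P.trace.re := by
  have hV : (hP.1.eigenvectorUnitary : Matrix m m ℂ) ∈ Matrix.unitaryGroup m ℂ :=
    (hP.1.eigenvectorUnitary).2
  set V : Matrix m m ℂ := (hP.1.eigenvectorUnitary : Matrix m m ℂ) with hVdef
  set D : Matrix m m ℂ := Matrix.diagonal (RCLike.ofReal ∘ hP.1.eigenvalues) with hDdef
  have hA : star V * W * V ∈ Matrix.unitaryGroup m ℂ :=
    Submonoid.mul_mem _ (Submonoid.mul_mem _ (Unitary.star_mem hV) hW) hV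
  have key : (W * P).trace = ((star V * W * V) * D).trace := by
    conv_lhs => rw [hP.1.spectral_theorem, Unitary.conjStarAlgAut_apply]
    have e1 : W * (V * D * star V) = (W * V) * (D * star V) := by noncomm_ring
    have e2 : (D * star V) * (W * V) = D * (star V * W * V) := by noncomm_ring
    rw [← hVdef, ← hDdef, e1, Matrix.trace_mul_comm, e2, Matrix.trace_mul_comm]
  have htr : P.trace.re = ∑ i, hP.1.eigenvalues i := by
    rw [trace_eq_sum_eig hP.1, Complex.re_sum]; simp
  have hDd : D = Matrix.diagonal (fun i => ((hP.1.eigenvalues i : ℝ) : ℂ)) := by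
    rw [hDdef]; rfl
  rw [key, hDd, trace_mul_diag, Complex.re_sum, htr]
  refine Finset.sum_le_sum fun i _ => ?_
  have h1 : ‖(star V * W * V) i i‖ ≤ 1 := unitary_diag_norm_le_one hA i
  have h2 : 0 ≤ hP.1.eigenvalues i := hP.eigenvalues_nonneg i
  have h3 : ((star V * W * V) i i * ((hP.1.eigenvalues i : ℝ) : ℂ)).re
      = ((star V * W * V) i i).re * hP.1.eigenvalues i := by
    simp [Complex.mul_re]
  rw [h3]
  nlinarith [Complex.re_le_norm ((star V * W * V) i i),
    le_refl ‖(star V * W * V) i i‖]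

lemma toEuclideanLin_mul (A B : Matrix m m ℂ) :
    Matrix.toEuclideanLin (A * B) =
      (Matrix.toEuclideanLin A).comp (Matrix.toEuclideanLin B) := by
  ext x
  simp [Matrix.toEuclideanLin_apply, Matrix.mulVec_mulVec]

lemma toEuclideanLin_one :
    Matrix.toEuclideanLin (1 : Matrix m m ℂ) = LinearMap.id := by
  ext x
  simp [Matrix.toEuclideanLin_apply]

lemma norm_toEuclideanLin_eq {M P : Matrix m m ℂ} (hP : P.IsHermitian) (hMP : Mᴴ * M = P * P)
    (x : EuclideanSpace ℂ m) :
    ‖Matrix.toEuclideanLin M x‖ = ‖Matrix.toEuclideanLin P x‖ := by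
  have key : ∀ N : Matrix m m ℂ, inner ℂ (Matrix.toEuclideanLin N x) (Matrix.toEuclideanLin N x)
      = inner ℂ x (Matrix.toEuclideanLin (Nᴴ * N) x) := by
    intro N
    rw [toEuclideanLin_mul, LinearMap.comp_apply,
      Matrix.toEuclideanLin_conjTranspose_eq_adjoint, LinearMap.adjoint_inner_right]
  have h1 : inner ℂ (Matrix.toEuclideanLin M x) (Matrix.toEuclideanLin M x)
      = inner ℂ (Matrix.toEuclideanLin P x) (Matrix.toEuclideanLin P x) := by
    rw [key M, key P, hP.eq, hMP]
  have h3 : ‖Matrix.toEuclideanLin M x‖ ^ 2 = ‖Matrix.toEuclideanLin P x‖ ^ 2 := by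
    rw [← inner_self_eq_norm_sq (𝕜 := ℂ), ← inner_self_eq_norm_sq (𝕜 := ℂ)]
    simpa [RCLike.re_to_complex] using congrArg Complex.re h1
  have := congrArg Real.sqrt h3
  rwa [Real.sqrt_sq (norm_nonneg _), Real.sqrt_sq (norm_nonneg _)] at this

lemma polar_aux {M P : Matrix m m ℂ} (hP : P.IsHermitian) (hMP : Mᴴ * M = P * P) :
    ∃ U ∈ Matrix.unitaryGroup m ℂ, M = U * P := by
  classical
  set E := EuclideanSpace ℂ m
  set LM := Matrix.toEuclideanLin M with hLM
  set LP := Matrix.toEuclideanLin P with hLP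
  have hnorm : ∀ x, ‖LM x‖ = ‖LP x‖ := fun x => norm_toEuclideanLin_eq hP hMP x
  have hker : LinearMap.ker LP ≤ LinearMap.ker LM := by
    intro x hx
    rw [LinearMap.mem_ker] at hx ⊢
    have := hnorm x
    rw [hx, norm_zero, norm_eq_zero] at this
    exact this
  let f0 : (E ⧸ LinearMap.ker LP) →ₗ[ℂ] E := Submodule.liftQ (LinearMap.ker LP) LM hker
  let e : (E ⧸ LinearMap.ker LP) ≃ₗ[ℂ] LinearMap.range LP := LP.quotKerEquivRange
  let f : (LinearMap.range LP) →ₗ[ℂ] E := f0 ∘ₗ (e.symm : LinearMap.range LP →ₗ[ℂ] _)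
  have hf : ∀ x : E, f ⟨LP x, LinearMap.mem_range_self _ x⟩ = LM x := by
    intro x
    have h1 : e (Submodule.Quotient.mk x) = ⟨LP x, LinearMap.mem_range_self _ x⟩ := by
      apply Subtype.ext
      exact LP.quotKerEquivRange_apply_mk x
    have h2 : e.symm ⟨LP x, LinearMap.mem_range_self _ x⟩ = Submodule.Quotient.mk x := by
      rw [← h1, LinearEquiv.symm_apply_apply]
    show f0 (e.symm ⟨LP x, LinearMap.mem_range_self _ x⟩) = LM x
    rw [h2]
    exact Submodule.liftQ_apply _ _ _
  have hiso : ∀ y : LinearMap.range LP, ‖f y‖ = ‖y‖ := by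
    rintro ⟨y, hy⟩
    obtain ⟨x, rfl⟩ := hy
    rw [hf x]
    exact (hnorm x).trans rfl
  let fI : (LinearMap.range LP) →ₗᵢ[ℂ] E := ⟨f, hiso⟩
  let U' : E →ₗᵢ[ℂ] E := fI.extend
  have hU'P : ∀ x : E, U' (LP x) = LM x := by
    intro x
    have := fI.extend_apply ⟨LP x, LinearMap.mem_range_self _ x⟩
    rw [← hf x]
    exact this
  let U : Matrix m m ℂ := Matrix.toEuclideanLin.symm U'.toLinearMap
  have hLU : Matrix.toEuclideanLin U = U'.toLinearMap := Matrix.toEuclideanLin.apply_symm_apply _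
  have hadj : Matrix.toEuclideanLin (star U * U) = LinearMap.id := by
    rw [Matrix.star_eq_conjTranspose, toEuclideanLin_mul,
      Matrix.toEuclideanLin_conjTranspose_eq_adjoint, hLU]
    apply LinearMap.ext
    intro x
    apply ext_inner_right ℂ
    intro y
    rw [LinearMap.comp_apply, LinearMap.adjoint_inner_left, LinearMap.id_apply]
    exact U'.inner_map_map x y
  have hUuni : U ∈ Matrix.unitaryGroup m ℂ := by
    rw [Matrix.mem_unitaryGroup_iff']
    apply Matrix.toEuclideanLin.injective
    rw [hadj, toEuclideanLin_one]
  refine ⟨U, hUuni, ?_⟩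
  apply Matrix.toEuclideanLin.injective
  rw [toEuclideanLin_mul, hLU]
  apply LinearMap.ext
  intro x
  exact (hU'P x).symm

lemma polar (M : Matrix m m ℂ) :
    ∃ U ∈ Matrix.unitaryGroup m ℂ, M = U * psqrt (Mᴴ * M) :=
  polar_aux (psqrt_psd _).1
    ((psqrt_mul_self (Matrix.posSemidef_conjTranspose_mul_self M)).symm)

lemma traceNorm_nonneg (M : Matrix m m ℂ) : 0 ≤ traceNorm M :=
  trace_re_nonneg (psqrt_psd _)

lemma re_trace_mul_le {W : Matrix m m ℂ} (hW : W ∈ Matrix.unitaryGroup m ℂ)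
    (M : Matrix m m ℂ) : (W * M).trace.re ≤ traceNorm M := by
  obtain ⟨U, hU, hM⟩ := polar M
  have h2 : W * M = (W * U) * psqrt (Mᴴ * M) := by
    conv_lhs => rw [hM]
    rw [Matrix.mul_assoc]
  rw [h2]
  exact re_trace_unitary_mul_psd_le (psqrt_psd _) (Submonoid.mul_mem _ hW hU)

lemma re_trace_le (M : Matrix m m ℂ) : M.trace.re ≤ traceNorm M := by
  have := re_trace_mul_le (Submonoid.one_mem _) M
  rwa [Matrix.one_mul] at this

lemma exists_unitary_trace_eq (M : Matrix m m ℂ) :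
    ∃ W ∈ Matrix.unitaryGroup m ℂ, (W * M).trace.re = traceNorm M := by
  obtain ⟨U, hU, hM⟩ := polar M
  refine ⟨star U, Unitary.star_mem hU, ?_⟩
  conv_lhs => rw [hM]
  rw [← Matrix.mul_assoc, Matrix.mem_unitaryGroup_iff'.mp hU, Matrix.one_mul]
  rfl

lemma traceNorm_triangle (A B : Matrix m m ℂ) :
    traceNorm (A + B) ≤ traceNorm A + traceNorm B := by
  obtain ⟨W, hW, hEq⟩ := exists_unitary_trace_eq (A + B)
  rw [← hEq, Matrix.mul_add, Matrix.trace_add, Complex.add_re]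
  exact add_le_add (re_trace_mul_le hW A) (re_trace_mul_le hW B)

lemma traceNorm_psd {P : Matrix m m ℂ} (hP : P.PosSemidef) : traceNorm P = P.trace.re := by
  unfold traceNorm
  rw [hP.1.eq, psqrt_sq hP]

lemma traceNorm_neg (M : Matrix m m ℂ) : traceNorm (-M) = traceNorm M := by
  unfold traceNorm
  rw [Matrix.conjTranspose_neg, neg_mul_neg]

omit [DecidableEq m] in
lemma trace_conjTranspose_mul_re (A : Matrix m m ℂ) :
    (Aᴴ * A).trace.re = ∑ i, ∑ j, ‖A j i‖ ^ 2 := by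
  rw [Matrix.trace, Complex.re_sum]
  refine Finset.sum_congr rfl fun i _ => ?_
  simp [Matrix.mul_apply, Matrix.conjTranspose_apply, Complex.re_sum, Complex.mul_conj',
    Complex.sq_norm, Complex.normSq_apply, Complex.mul_re]

lemma re_trace_mul_le_sqrt (C B : Matrix m m ℂ) :
    (C * B).trace.re ≤
      Real.sqrt ((Cᴴ * C).trace.re) * Real.sqrt ((Bᴴ * B).trace.re) := by
  classical
  let v : EuclideanSpace ℂ (m × m) := WithLp.toLp 2 (fun p : m × m => conj (C p.2 p.1))
  let w : EuclideanSpace ℂ (m × m) := WithLp.toLp 2 (fun p : m × m => B p.1 p.2)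
  have hinner : inner ℂ v w = (C * B).trace := by
    simp only [PiLp.inner_apply, RCLike.inner_apply, Matrix.trace, Matrix.diag,
      Matrix.mul_apply]
    rw [Fintype.sum_prod_type]
    rw [Finset.sum_comm]
    refine Finset.sum_congr rfl fun i _ => Finset.sum_congr rfl fun j _ => ?_
    simp only [v, w, PiLp.toLp_apply, starRingEnd_apply, star_star]; ring
  have hv : ‖v‖ = Real.sqrt ((Cᴴ * C).trace.re) := by
    rw [EuclideanSpace.norm_eq, trace_conjTranspose_mul_re]
    congr 1
    rw [Fintype.sum_prod_type]
    refine Finset.sum_congr rfl fun i _ => Finset.sum_congr rfl fun j _ => ?_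
    simp [v]
  have hw : ‖w‖ = Real.sqrt ((Bᴴ * B).trace.re) := by
    rw [EuclideanSpace.norm_eq, trace_conjTranspose_mul_re]
    congr 1
    rw [Fintype.sum_prod_type, Finset.sum_comm]
  calc (C * B).trace.re = (inner ℂ v w).re := by rw [hinner]
    _ ≤ ‖inner ℂ v w‖ := Complex.re_le_norm _
    _ ≤ ‖v‖ * ‖w‖ := norm_inner_le_norm v w
    _ = _ := by rw [hv, hw]

lemma sandwich_psd {Q : Matrix m m ℂ} (hQ : Q.PosSemidef) {B : Matrix m m ℂ}
    (hB : B.IsHermitian) : (B * Q * B).PosSemidef := by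
  have := hQ.conjTranspose_mul_mul_same B
  rwa [hB.eq] at this

lemma trace_mul_psd_re_nonneg {P Q : Matrix m m ℂ} (hP : P.PosSemidef) (hQ : Q.PosSemidef) :
    0 ≤ (P * Q).trace.re := by
  have h1 : (P * Q).trace = (psqrt P * Q * psqrt P).trace := by
    conv_lhs => rw [← psqrt_mul_self hP]
    rw [Matrix.mul_assoc, Matrix.trace_mul_comm]
  rw [h1]
  exact trace_re_nonneg (sandwich_psd hQ (psqrt_psd P).1)

lemma unitary_conj_diag_mul (V : Matrix m m ℂ) (hV : V ∈ Matrix.unitaryGroup m ℂ)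
    (d e : m → ℂ) :
    (V * Matrix.diagonal d * star V) * (V * Matrix.diagonal e * star V)
      = V * Matrix.diagonal (d * e) * star V := by
  have h := Matrix.mem_unitaryGroup_iff'.mp hV
  calc (V * Matrix.diagonal d * star V) * (V * Matrix.diagonal e * star V)
      = V * (Matrix.diagonal d * ((star V * V) * (Matrix.diagonal e * star V))) := by
        noncomm_ring
    _ = V * (Matrix.diagonal d * (Matrix.diagonal e * star V)) := by rw [h, Matrix.one_mul]
    _ = V * (Matrix.diagonal d * Matrix.diagonal e) * star V := by noncomm_ring
    _ = V * Matrix.diagonal (d * e) * star V := by rw [Matrix.diagonal_mul_diagonal]; rfl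

lemma herm_decomp {Δ : Matrix m m ℂ} (hΔ : Δ.IsHermitian) :
    ∃ U T : Matrix m m ℂ, U ∈ Matrix.unitaryGroup m ℂ ∧ T.PosSemidef ∧
      U * Δ = T ∧ Δ * U = T ∧ (T + Δ).PosSemidef ∧ (T - Δ).PosSemidef := by
  classical
  set V : Matrix m m ℂ := (hΔ.eigenvectorUnitary : Matrix m m ℂ) with hVdef
  have hV : V ∈ Matrix.unitaryGroup m ℂ := (hΔ.eigenvectorUnitary).2
  have hVV : star V * V = 1 := Matrix.mem_unitaryGroup_iff'.mp hV
  set lam : m → ℝ := hΔ.eigenvalues with hlam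
  set dabs : m → ℂ := fun i => ((|lam i| : ℝ) : ℂ) with hdabs
  set dsgn : m → ℂ := fun i => (if 0 ≤ lam i then 1 else -1 : ℂ) with hdsgn
  set dlam : m → ℂ := RCLike.ofReal ∘ lam with hdlam
  have hsp : Δ = V * Matrix.diagonal dlam * star V := hΔ.spectral_theorem
  set U : Matrix m m ℂ := V * Matrix.diagonal dsgn * star V with hU
  set T : Matrix m m ℂ := V * Matrix.diagonal dabs * star V with hT
  have habs : dsgn * dlam = dabs := by
    funext i
    show dsgn i * dlam i = dabs i
    have hdl : dlam i = ((lam i : ℝ) : ℂ) := rfl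
    by_cases h : 0 ≤ lam i
    · simp [dsgn, dabs, hdl, h, abs_of_nonneg h]
    · simp only [dsgn, dabs, hdl, h, if_false]
      rw [abs_of_neg (not_le.mp h)]
      push_cast; ring
  have hUuni : U ∈ Matrix.unitaryGroup m ℂ := by
    rw [Matrix.mem_unitaryGroup_iff]
    have hds : star dsgn = dsgn := by
      funext i
      simp only [Pi.star_apply]
      show star (dsgn i) = dsgn i
      by_cases h : 0 ≤ lam i <;> simp [dsgn, h]
    have hd : star (Matrix.diagonal dsgn) = Matrix.diagonal dsgn := by
      rw [Matrix.star_eq_conjTranspose, Matrix.diagonal_conjTranspose, hds]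
    have hstar : star U = V * Matrix.diagonal dsgn * star V := by
      rw [hU, star_mul, star_mul, star_star, hd, ← Matrix.mul_assoc]
    rw [hstar, hU, unitary_conj_diag_mul V hV]
    have h1 : dsgn * dsgn = 1 := by
      funext i
      show dsgn i * dsgn i = 1
      by_cases h : 0 ≤ lam i <;> simp [dsgn, h]
    rw [h1]
    rw [show Matrix.diagonal (1 : m → ℂ) = (1 : Matrix m m ℂ) from Matrix.diagonal_one,
      Matrix.mul_one]
    exact Matrix.mem_unitaryGroup_iff.mp hV
  have hpsd_of_nonneg : ∀ d : m → ℂ, (∀ i, 0 ≤ d i) →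
      (V * Matrix.diagonal d * star V).PosSemidef := by
    intro d hd
    have h1 : (Matrix.diagonal d).PosSemidef := Matrix.PosSemidef.diagonal hd
    have := h1.mul_mul_conjTranspose_same V
    rwa [← Matrix.star_eq_conjTranspose] at this
  have hTpsd : T.PosSemidef := hpsd_of_nonneg dabs fun i => by
    show (0:ℂ) ≤ ((|lam i| : ℝ) : ℂ)
    rw [Complex.zero_le_real]
    exact abs_nonneg _
  have hUD : U * Δ = T := by
    conv_lhs => rw [hU, hsp]
    rw [unitary_conj_diag_mul V hV, habs]
  have hDU : Δ * U = T := by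
    conv_lhs => rw [hU, hsp]
    rw [unitary_conj_diag_mul V hV]
    have : dlam * dsgn = dabs := by rw [mul_comm]; exact habs
    rw [this]
  have hplus : (T + Δ).PosSemidef := by
    have : T + Δ = V * Matrix.diagonal (dabs + dlam) * star V := by
      rw [hT]
      conv_lhs => rw [hsp]
      have hda : Matrix.diagonal (dabs + dlam) = Matrix.diagonal dabs + Matrix.diagonal dlam := by
        ext i j
        rcases eq_or_ne i j with rfl | h
        · simp
        · simp [Matrix.diagonal_apply_ne _ h]
      rw [hda]
      noncomm_ring
    rw [this]
    refine hpsd_of_nonneg _ fun i => ?_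
    show (0:ℂ) ≤ ((|lam i| : ℝ) : ℂ) + ((lam i : ℝ) : ℂ)
    rw [← Complex.ofReal_add, Complex.zero_le_real]
    linarith [abs_nonneg (lam i), neg_abs_le (lam i)]
  have hminus : (T - Δ).PosSemidef := by
    have : T - Δ = V * Matrix.diagonal (dabs - dlam) * star V := by
      rw [hT]
      conv_lhs => rw [hsp]
      have hds2 : Matrix.diagonal (dabs - dlam) = Matrix.diagonal dabs - Matrix.diagonal dlam := by
        ext i j
        rcases eq_or_ne i j with rfl | h
        · simp
        · simp [Matrix.diagonal_apply_ne _ h]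
      rw [hds2]
      noncomm_ring
    rw [this]
    refine hpsd_of_nonneg _ fun i => ?_
    show (0:ℂ) ≤ ((|lam i| : ℝ) : ℂ) - ((lam i : ℝ) : ℂ)
    rw [← Complex.ofReal_sub, Complex.zero_le_real]
    linarith [le_abs_self (lam i)]
  exact ⟨U, T, hUuni, hTpsd, hUD, hDU, hplus, hminus⟩

lemma powers_stormer {A B : Matrix m m ℂ} (hA : A.PosSemidef) (hB : B.PosSemidef) :
    ((A - B) * (A - B)).trace.re ≤ traceNorm (A * A - B * B) := by
  obtain ⟨U, T, hU, hT, hUD, hDU, hplus, hminus⟩ := herm_decomp (hA.1.sub hB.1)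
  have e1 : U * ((A - B) * (A + B)) + U * ((A + B) * (A - B))
      = U * (A*A - B*B) + U * (A*A - B*B) := by noncomm_ring
  have t1 : (U * ((A - B) * (A + B))).trace = (T * (A + B)).trace := by
    rw [← Matrix.mul_assoc, hUD]
  have t2 : (U * ((A + B) * (A - B))).trace = (T * (A + B)).trace := by
    have e : U * ((A + B) * (A - B)) = (U * (A + B)) * (A - B) := by noncomm_ring
    rw [e, Matrix.trace_mul_comm, ← Matrix.mul_assoc, hDU]
  have t3 : (U * (A*A - B*B)).trace + (U * (A*A - B*B)).trace
      = (T * (A + B)).trace + (T * (A + B)).trace := by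
    have h := congrArg Matrix.trace e1
    rw [Matrix.trace_add, Matrix.trace_add, t1, t2] at h
    exact h.symm
  have h2 : ((A - B) * (A - B)).trace.re ≤ (T * (A + B)).trace.re := by
    have e2 : (T + (A - B)) * (B + B) + (T - (A - B)) * (A + A)
        = (T * (A + B) + T * (A + B)) - ((A - B) * (A - B) + (A - B) * (A - B)) := by
      noncomm_ring
    have n1 : 0 ≤ ((T + (A - B)) * B).trace.re := trace_mul_psd_re_nonneg hplus hB
    have n2 : 0 ≤ ((T - (A - B)) * A).trace.re := trace_mul_psd_re_nonneg hminus hA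
    have h := congrArg (fun M : Matrix m m ℂ => M.trace.re) e2
    simp only [Matrix.mul_add, Matrix.trace_add, Matrix.trace_sub, Complex.add_re,
      Complex.sub_re] at h
    have hTS : (T * (A + B)).trace.re = (T * A).trace.re + (T * B).trace.re := by
      rw [Matrix.mul_add, Matrix.trace_add, Complex.add_re]
    linarith
  have h3 : (U * (A*A - B*B)).trace.re ≤ traceNorm (A*A - B*B) := re_trace_mul_le hU _
  have h4 : (U * (A*A - B*B)).trace.re = (T * (A + B)).trace.re := by
    have h := congrArg Complex.re t3
    simp only [Complex.add_re] at h
    linarith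
  linarith

lemma traceNorm_mul_le (A B : Matrix m m ℂ) :
    traceNorm (A * B) ≤
      Real.sqrt ((Aᴴ * A).trace.re) * Real.sqrt ((Bᴴ * B).trace.re) := by
  obtain ⟨W, hW, hEq⟩ := exists_unitary_trace_eq (A * B)
  rw [← hEq, ← Matrix.mul_assoc]
  have h := re_trace_mul_le_sqrt (W * A) B
  have e : (W * A)ᴴ * (W * A) = Aᴴ * A := by
    rw [Matrix.conjTranspose_mul]
    calc Aᴴ * Wᴴ * (W * A) = Aᴴ * ((star W * W) * A) := by
          rw [Matrix.star_eq_conjTranspose]; noncomm_ring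
      _ = Aᴴ * A := by rw [Matrix.mem_unitaryGroup_iff'.mp hW, Matrix.one_mul]
  rwa [e] at h

lemma fidelity_eq_traceNorm {r s : Matrix m m ℂ} (hs : s.PosSemidef) :
    fidelity r s = traceNorm (psqrt s * psqrt r) := by
  unfold fidelity traceNorm
  have e : (psqrt s * psqrt r)ᴴ * (psqrt s * psqrt r) = psqrt r * s * psqrt r := by
    rw [Matrix.conjTranspose_mul, (psqrt_psd s).1.eq, (psqrt_psd r).1.eq]
    calc psqrt r * psqrt s * (psqrt s * psqrt r)
        = psqrt r * (psqrt s * psqrt s) * psqrt r := by noncomm_ring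
      _ = psqrt r * s * psqrt r := by rw [psqrt_mul_self hs]
  rw [e]

lemma fidelity_nonneg (r s : Matrix m m ℂ) : 0 ≤ fidelity r s :=
  trace_re_nonneg (psqrt_psd _)

lemma traceDist_nonneg (r s : Matrix m m ℂ) : 0 ≤ traceDist r s := by
  unfold traceDist
  have := traceNorm_nonneg (r - s)
  linarith

lemma traceDist_le_one {r s : Matrix m m ℂ} (hr : r.PosSemidef) (hs : s.PosSemidef)
    (htr : r.trace = 1) (hts : s.trace = 1) : traceDist r s ≤ 1 := by
  unfold traceDist
  have h1 : traceNorm (r - s) ≤ traceNorm r + traceNorm (-s) := by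
    have := traceNorm_triangle r (-s)
    simpa [sub_eq_add_neg] using this
  rw [traceNorm_neg, traceNorm_psd hr, traceNorm_psd hs, htr, hts] at h1
  simp only [Complex.one_re] at h1
  linarith

lemma fvdg_lower {r s : Matrix m m ℂ} (hr : r.PosSemidef) (hs : s.PosSemidef)
    (htr : r.trace = 1) (hts : s.trace = 1) :
    1 - traceDist r s ≤ fidelity r s := by
  set X := psqrt r with hX
  set Y := psqrt s with hY
  have hXX : X * X = r := psqrt_mul_self hr
  have hYY : Y * Y = s := psqrt_mul_self hs
  have hPS : ((X - Y) * (X - Y)).trace.re ≤ traceNorm (r - s) := by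
    have := powers_stormer (psqrt_psd r) (psqrt_psd s)
    rwa [hXX, hYY] at this
  have expand : (X - Y) * (X - Y) = (X * X + Y * Y) - (X * Y + Y * X) := by noncomm_ring
  have hXY : (X * Y).trace = (Y * X).trace := Matrix.trace_mul_comm X Y
  have hre : ((X - Y) * (X - Y)).trace.re = 2 - 2 * (Y * X).trace.re := by
    rw [expand, Matrix.trace_sub, Matrix.trace_add, Matrix.trace_add, hXX, hYY, htr, hts, hXY]
    simp only [Complex.sub_re, Complex.add_re, Complex.one_re]
    ring
  have hF : (Y * X).trace.re ≤ fidelity r s := by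
    rw [fidelity_eq_traceNorm hs]
    exact re_trace_le (Y * X)
  unfold traceDist
  linarith [hPS, hre, hF]

lemma fvdg_upper {r s : Matrix m m ℂ} (hr : r.PosSemidef) (hs : s.PosSemidef)
    (htr : r.trace = 1) (hts : s.trace = 1) :
    fidelity r s ≤ 1 ∧ traceDist r s ≤ Real.sqrt (1 - fidelity r s ^ 2) := by
  set X := psqrt r with hXdef
  set Y0 := psqrt s with hY0def
  have hXh : Xᴴ = X := (psqrt_psd r).1.eq
  have hY0h : Y0ᴴ = Y0 := (psqrt_psd s).1.eq
  have hXX : X * X = r := psqrt_mul_self hr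
  have hY0Y0 : Y0 * Y0 = s := psqrt_mul_self hs
  obtain ⟨W, hW, hWEq⟩ := exists_unitary_trace_eq (Y0 * X)
  set F := fidelity r s with hFdef
  have hFtn : F = traceNorm (Y0 * X) := fidelity_eq_traceNorm hs
  set Y : Matrix m m ℂ := Y0 * star W with hYdef
  have hYc : Yᴴ = W * Y0 := by
    rw [hYdef, Matrix.conjTranspose_mul, ← Matrix.star_eq_conjTranspose, star_star, hY0h]
  have hYYc : Y * Yᴴ = s := by
    rw [hYdef, hYc]
    calc Y0 * star W * (W * Y0) = Y0 * ((star W * W) * Y0) := by noncomm_ring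
      _ = Y0 * Y0 := by rw [Matrix.mem_unitaryGroup_iff'.mp hW, Matrix.one_mul]
      _ = s := hY0Y0
  have hRe : (Yᴴ * X).trace.re = F := by
    rw [hYc, hFtn, ← hWEq, Matrix.mul_assoc]
  have hXYtr : (Xᴴ * Y).trace.re = F := by
    have e : Xᴴ * Y = (Yᴴ * X)ᴴ := by
      rw [Matrix.conjTranspose_mul, Matrix.conjTranspose_conjTranspose]
    rw [e, Matrix.trace_conjTranspose]
    rw [Complex.star_def, Complex.conj_re]
    exact hRe
  have hTrXX : (Xᴴ * X).trace.re = 1 := by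
    rw [hXh, hXX, htr, Complex.one_re]
  have hTrYY : (Yᴴ * Y).trace.re = 1 := by
    rw [Matrix.trace_mul_comm, hYYc, hts, Complex.one_re]
  have hPP : ((X - Y)ᴴ * (X - Y)).trace.re = 2 - 2 * F := by
    have e : (X - Y)ᴴ * (X - Y) = (Xᴴ * X + Yᴴ * Y) - (Xᴴ * Y + Yᴴ * X) := by
      rw [Matrix.conjTranspose_sub]; noncomm_ring
    rw [e, Matrix.trace_sub, Matrix.trace_add, Matrix.trace_add]
    simp only [Complex.sub_re, Complex.add_re]
    rw [hTrXX, hTrYY] at *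
    have := hRe
    have := hXYtr
    linarith
  have hQQ : ((X + Y)ᴴ * (X + Y)).trace.re = 2 + 2 * F := by
    have e : (X + Y)ᴴ * (X + Y) = (Xᴴ * X + Yᴴ * Y) + (Xᴴ * Y + Yᴴ * X) := by
      rw [Matrix.conjTranspose_add]; noncomm_ring
    rw [e, Matrix.trace_add, Matrix.trace_add, Matrix.trace_add]
    simp only [Complex.add_re]
    linarith [hTrXX, hTrYY, hRe, hXYtr]
  have hPPnn : 0 ≤ ((X - Y)ᴴ * (X - Y)).trace.re :=
    trace_re_nonneg (Matrix.posSemidef_conjTranspose_mul_self (X - Y))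
  have hFle1 : F ≤ 1 := by rw [hPP] at hPPnn; linarith
  refine ⟨hFle1, ?_⟩
  -- main bound
  have hFnn : 0 ≤ F := fidelity_nonneg r s
  set P : Matrix m m ℂ := X - Y with hPdef
  set Q : Matrix m m ℂ := X + Y with hQdef
  have id1 : P * Qᴴ + Q * Pᴴ = (r - s) + (r - s) := by
    rw [hPdef, hQdef, Matrix.conjTranspose_add, Matrix.conjTranspose_sub]
    have : (X - Y) * (Xᴴ + Yᴴ) + (X + Y) * (Xᴴ - Yᴴ)
        = (X * Xᴴ + X * Xᴴ) - (Y * Yᴴ + Y * Yᴴ) := by noncomm_ring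
    rw [this, hXh, hXX, hYYc]
    abel
  obtain ⟨W2, hW2, hW2Eq⟩ := exists_unitary_trace_eq (r - s)
  have step1 : traceNorm (r - s) + traceNorm (r - s)
      ≤ traceNorm (P * Qᴴ) + traceNorm (Q * Pᴴ) := by
    have h1 : (W2 * (P * Qᴴ)).trace.re ≤ traceNorm (P * Qᴴ) := re_trace_mul_le hW2 _
    have h2 : (W2 * (Q * Pᴴ)).trace.re ≤ traceNorm (Q * Pᴴ) := re_trace_mul_le hW2 _
    have e : W2 * (P * Qᴴ) + W2 * (Q * Pᴴ) = W2 * (r - s) + W2 * (r - s) := by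
      rw [← Matrix.mul_add, id1, Matrix.mul_add]
    have h3 := congrArg (fun M : Matrix m m ℂ => M.trace.re) e
    simp only [Matrix.trace_add, Complex.add_re] at h3
    rw [hW2Eq] at h3
    linarith
  have tn1 : traceNorm (P * Qᴴ) ≤ Real.sqrt (2 - 2 * F) * Real.sqrt (2 + 2 * F) := by
    have := traceNorm_mul_le P Qᴴ
    rw [hPP] at this
    have e : (Qᴴᴴ * Qᴴ).trace.re = (Qᴴ * Q).trace.re := by
      rw [Matrix.conjTranspose_conjTranspose, Matrix.trace_mul_comm]
    rw [e, hQQ] at this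
    exact this
  have tn2 : traceNorm (Q * Pᴴ) ≤ Real.sqrt (2 + 2 * F) * Real.sqrt (2 - 2 * F) := by
    have := traceNorm_mul_le Q Pᴴ
    rw [hQQ] at this
    have e : (Pᴴᴴ * Pᴴ).trace.re = (Pᴴ * P).trace.re := by
      rw [Matrix.conjTranspose_conjTranspose, Matrix.trace_mul_comm]
    rw [e, hPP] at this
    exact this
  have hsqrt : Real.sqrt (2 - 2 * F) * Real.sqrt (2 + 2 * F)
      = 2 * Real.sqrt (1 - F ^ 2) := by
    rw [← Real.sqrt_mul (by linarith)]
    have e : (2 - 2 * F) * (2 + 2 * F) = 4 * (1 - F ^ 2) := by ring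
    rw [e, Real.sqrt_mul (by norm_num : (0:ℝ) ≤ 4)]
    rw [show Real.sqrt 4 = 2 by
      rw [show (4:ℝ) = 2 ^ 2 by norm_num, Real.sqrt_sq (by norm_num : (0:ℝ) ≤ 2)]]
  have final : traceNorm (r - s) ≤ 2 * Real.sqrt (1 - F ^ 2) := by
    rw [hsqrt] at tn1
    rw [mul_comm (Real.sqrt (2 + 2 * F)), hsqrt] at tn2
    linarith
  unfold traceDist
  linarith

lemma had_psd {X : Type*} [Fintype X] [DecidableEq X] {ρ : Matrix X X ℂ}
    (hρ : ρ.PosSemidef) (u : X → ℂ) : (ρ ⊙ outerMat u).PosSemidef := by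
  refine Matrix.PosSemidef.of_dotProduct_mulVec_nonneg ?_ ?_
  · ext x y
    have hxy := congrFun (congrFun hρ.1 x) y
    rw [Matrix.conjTranspose_apply] at hxy ⊢
    simp only [Matrix.hadamard_apply, outerMat, star_mul']
    rw [show star (ρ y x) = ρ x y from hxy]
    simp only [star_mul', star_star, starRingEnd_apply]
    ring
  · intro w
    have h := hρ.dotProduct_mulVec_nonneg (fun x => conj (u x) * w x)
    convert h using 1
    simp only [dotProduct, Matrix.mulVec, Pi.star_apply]
    refine Finset.sum_congr rfl fun x _ => ?_
    rw [Finset.mul_sum, Finset.mul_sum]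
    refine Finset.sum_congr rfl fun y _ => ?_
    simp only [Matrix.hadamard_apply, outerMat, star_mul', star_star, starRingEnd_apply]
    ring

lemma had_trace {X : Type*} [Fintype X] [DecidableEq X] {ρ : Matrix X X ℂ}
    (hρdiag : ∀ x, ρ x x = 1) {u : X → ℂ} (hu : ∑ x, ‖u x‖ ^ 2 = 1) :
    (ρ ⊙ outerMat u).trace = 1 := by
  have : (ρ ⊙ outerMat u).trace = ∑ x, ((‖u x‖ ^ 2 : ℝ) : ℂ) := by
    rw [Matrix.trace]
    refine Finset.sum_congr rfl fun x _ => ?_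
    simp only [Matrix.diag, Matrix.hadamard_apply, outerMat, hρdiag x, one_mul]
    rw [Complex.mul_conj]
    rw [Complex.normSq_eq_norm_sq]
  rw [this, ← Complex.ofReal_sum, hu, Complex.ofReal_one]

end FvdG

theorem stmt5
    {X : Type*} [Fintype X] [DecidableEq X] [Nonempty X]
    (ρ σ : Matrix X X ℂ)
    (hρ : ρ.PosSemidef) (hρdiag : ∀ x, ρ x x = 1)
    (hσ : σ.PosSemidef) (hσdiag : ∀ x, σ x x = 1) :
    1 - DH ρ σ ≤ FH ρ σ ∧ FH ρ σ ≤ Real.sqrt (1 - DH ρ σ ^ 2) := by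
  classical
  set S := { u : X → ℂ // ∑ x, ‖u x‖ ^ 2 = 1 } with hS
  have hne : Nonempty S := by
    obtain ⟨x0⟩ := ‹Nonempty X›
    refine ⟨⟨Pi.single x0 1, ?_⟩⟩
    rw [Finset.sum_eq_single x0]
    · simp
    · intro b _ hb; simp [Pi.single_apply, hb]
    · simp
  set f : S → ℝ := fun u => fidelity (ρ ⊙ outerMat u.1) (σ ⊙ outerMat u.1) with hf
  set g : S → ℝ := fun u => traceDist (ρ ⊙ outerMat u.1) (σ ⊙ outerMat u.1) with hg
  have hFH : FH ρ σ = ⨅ u : S, f u := rfl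
  have hDH : DH ρ σ = ⨆ u : S, g u := rfl
  have hr : ∀ u : S, (ρ ⊙ outerMat u.1).PosSemidef := fun u => FvdG.had_psd hρ u.1
  have hs : ∀ u : S, (σ ⊙ outerMat u.1).PosSemidef := fun u => FvdG.had_psd hσ u.1
  have htr : ∀ u : S, (ρ ⊙ outerMat u.1).trace = 1 := fun u => FvdG.had_trace hρdiag u.2
  have hts : ∀ u : S, (σ ⊙ outerMat u.1).trace = 1 := fun u => FvdG.had_trace hσdiag u.2
  have hf0 : ∀ u : S, 0 ≤ f u := fun u => FvdG.fidelity_nonneg _ _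
  have hf1 : ∀ u : S, f u ≤ 1 := fun u =>
    (FvdG.fvdg_upper (hr u) (hs u) (htr u) (hts u)).1
  have hg0 : ∀ u : S, 0 ≤ g u := fun u => FvdG.traceDist_nonneg _ _
  have hg1 : ∀ u : S, g u ≤ 1 := fun u =>
    FvdG.traceDist_le_one (hr u) (hs u) (htr u) (hts u)
  have hbddF : BddBelow (Set.range f) := ⟨0, by rintro _ ⟨u, rfl⟩; exact hf0 u⟩
  have hbddG : BddAbove (Set.range g) := ⟨1, by rintro _ ⟨u, rfl⟩; exact hg1 u⟩
  have hFH_le : ∀ u : S, FH ρ σ ≤ f u := fun u => by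
    rw [hFH]; exact ciInf_le hbddF u
  have hDH_ge : ∀ u : S, g u ≤ DH ρ σ := fun u => by
    rw [hDH]; exact le_ciSup hbddG u
  have hFH0 : 0 ≤ FH ρ σ := by
    rw [hFH]; exact le_ciInf hf0
  have hDH0 : 0 ≤ DH ρ σ := by
    obtain ⟨u0⟩ := hne
    exact (hg0 u0).trans (hDH_ge u0)
  have hFH1 : FH ρ σ ≤ 1 := by
    obtain ⟨u0⟩ := hne
    exact (hFH_le u0).trans (hf1 u0)
  constructor
  · rw [hFH]
    refine le_ciInf fun u => ?_
    have h1 : 1 - g u ≤ f u := FvdG.fvdg_lower (hr u) (hs u) (htr u) (hts u)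
    have h2 := hDH_ge u
    linarith
  · have hDHle : DH ρ σ ≤ Real.sqrt (1 - FH ρ σ ^ 2) := by
      rw [hDH]
      refine ciSup_le fun u => ?_
      have h1 : g u ≤ Real.sqrt (1 - f u ^ 2) :=
        (FvdG.fvdg_upper (hr u) (hs u) (htr u) (hts u)).2
      refine h1.trans (Real.sqrt_le_sqrt ?_)
      have := hFH_le u
      nlinarith [hFH0]
    have hsq : DH ρ σ ^ 2 ≤ 1 - FH ρ σ ^ 2 := by
      have h2 : DH ρ σ ^ 2 ≤ Real.sqrt (1 - FH ρ σ ^ 2) ^ 2 :=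
        pow_le_pow_left₀ hDH0 hDHle 2
      rwa [Real.sq_sqrt (by nlinarith [hFH0, hFH1])] at h2
    rw [show (1 : ℝ) - DH ρ σ ^ 2 = 1 - DH ρ σ ^ 2 from rfl]
    have hgoal : FH ρ σ ^ 2 ≤ 1 - DH ρ σ ^ 2 := by linarith
    calc FH ρ σ = Real.sqrt (FH ρ σ ^ 2) := (Real.sqrt_sq hFH0).symm
      _ ≤ Real.sqrt (1 - DH ρ σ ^ 2) := Real.sqrt_le_sqrt hgoal
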